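/- Fix integers M > 1 and 1 ≤ A < M, a real R > 0, and an arbitrary alphabet 𝒜 ⊆ {0,…,M−1} with |𝒜| = A. With C_n(πR², M, 𝒜) the n-iterate Cantor set based in [0, πR²], the first eigenvalue λ_0(n) = ∫_{C_n(πR²,M,𝒜)} e^{-r} dr satisfies λ_0(n) = (1 − e^{−M^{−n} πR²}) · ∏_{j=1}^{n} Σ_{a ∈ 𝒜} e^{−a·M^{−j} πR²}. -/

import Mathlib

open MeasureTheory Finset

set_option maxHeartbeats 800000

/-- Discrete `n`-iterate Cantor set with base `M` and alphabet `S`. -/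
def cantorD (M : ℕ) (S : Finset ℕ) (n : ℕ) : Set ℕ :=
  {x | ∃ a : Fin n → ℕ, (∀ j, a j ∈ S) ∧ x = ∑ j, a j * M ^ (j : ℕ)}

/-- Continuous `n`-iterate Cantor set with base `M`, alphabet `S`, based in `[0, L]`. -/
def cantorC (M : ℕ) (S : Finset ℕ) (L : ℝ) (n : ℕ) : Set ℝ :=
  ⋃ x ∈ cantorD M S n, Set.Icc (L / M ^ n * x) (L / M ^ n * x + L / M ^ n)

/-- Uniqueness of base-M representations. -/
lemma digits_inj {M : ℕ} (hM : 1 < M) :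
    ∀ {n : ℕ} (a b : Fin n → ℕ), (∀ j, a j < M) → (∀ j, b j < M) →
      (∑ j, a j * M ^ (j : ℕ)) = ∑ j, b j * M ^ (j : ℕ) → a = b := by
  intro n
  induction n with
  | zero => intro a b _ _ _; funext j; exact j.elim0
  | succ n ih =>
    intro a b ha hb hsum
    have expand : ∀ c : Fin (n+1) → ℕ,
        (∑ j, c j * M ^ (j : ℕ)) = c 0 + M * ∑ j : Fin n, c j.succ * M ^ (j : ℕ) := by
      intro c
      rw [Fin.sum_univ_succ, Finset.mul_sum]
      simp only [Fin.val_zero, pow_zero, mul_one, Fin.val_succ, pow_succ]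
      congr 1
      apply Finset.sum_congr rfl
      intro j _
      ring
    rw [expand a, expand b] at hsum
    have h0 : a 0 = b 0 := by
      have := congrArg (· % M) hsum
      simpa [Nat.add_mul_mod_self_left, Nat.mod_eq_of_lt (ha 0), Nat.mod_eq_of_lt (hb 0)]
        using this
    have htail : (∑ j : Fin n, a j.succ * M ^ (j : ℕ)) = ∑ j : Fin n, b j.succ * M ^ (j : ℕ) := by
      rw [h0] at hsum
      have := Nat.add_left_cancel hsum
      exact Nat.eq_of_mul_eq_mul_left (Nat.lt_of_lt_of_le Nat.zero_lt_one hM.le) this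
    have := ih (fun j => a j.succ) (fun j => b j.succ) (fun j => ha j.succ) (fun j => hb j.succ) htail
    funext j
    refine Fin.cases h0 (fun i => ?_) j
    exact congrFun this i

lemma int_exp_neg {a b : ℝ} (hab : a ≤ b) :
    ∫ r in Set.Ioc a b, Real.exp (-r) = Real.exp (-a) - Real.exp (-b) := by
  rw [← intervalIntegral.integral_of_le hab, intervalIntegral.integral_comp_neg Real.exp,
    integral_exp]

theorem stmt_5 (M A : ℕ) (hM : 1 < M) (hA1 : 1 ≤ A) (hAM : A < M)
    (𝒜 : Finset ℕ) (h𝒜 : 𝒜 ⊆ Finset.range M) (hcard : 𝒜.card = A)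
    (R : ℝ) (hR : 0 < R) (n : ℕ) :
    (∫ r in cantorC M 𝒜 (Real.pi * R ^ 2) n, Real.exp (-r)) =
      (1 - Real.exp (-(Real.pi * R ^ 2) / M ^ n)) *
        ∏ j ∈ Finset.Icc 1 n,
          ∑ a ∈ 𝒜, Real.exp (-(a : ℝ) * (Real.pi * R ^ 2) / M ^ j) := by
  classical
  set L : ℝ := Real.pi * R ^ 2 with hLdef
  have hL : 0 < L := by positivity
  have hMR : (0:ℝ) < M := by exact_mod_cast Nat.lt_of_lt_of_le Nat.zero_lt_one hM.le
  set h : ℝ := L / (M:ℝ) ^ n with hhdef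
  have hh : 0 < h := by positivity
  set f : (Fin n → ℕ) → ℕ := fun a => ∑ j, a j * M ^ (j : ℕ) with hf
  set P : Finset (Fin n → ℕ) := Fintype.piFinset fun _ => 𝒜 with hP
  set D : Finset ℕ := P.image f with hD
  have hlt : ∀ a ∈ P, ∀ j, a j < M := by
    intro a ha j
    have := (Fintype.mem_piFinset.mp ha) j
    simpa using h𝒜 this
  -- the Cantor set as a finite union
  have hset : cantorC M 𝒜 L n = ⋃ x ∈ D, Set.Icc (h * x) (h * x + h) := by
    unfold cantorC
    ext r
    simp only [Set.mem_iUnion, exists_prop, hD, Finset.mem_image, hP,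
      Fintype.mem_piFinset, hf, cantorD, Set.mem_setOf_eq]
    constructor
    · rintro ⟨x, ⟨a, ha, hx⟩, hr⟩; exact ⟨x, ⟨a, ha, hx.symm⟩, hr⟩
    · rintro ⟨x, ⟨a, ha, hx⟩, hr⟩; exact ⟨x, ⟨a, ha, hx.symm⟩, hr⟩
  -- replace closed intervals by half-open ones, a.e. equal
  have hae : (⋃ x ∈ D, Set.Icc (h * x) (h * x + h)) =ᵐ[volume]
      ⋃ x ∈ D, Set.Ioc (h * x) (h * x + h) := by
    rw [MeasureTheory.ae_eq_set]
    constructor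
    · refine measure_mono_null ?_
        (Set.Finite.measure_zero ((D.finite_toSet).image fun x : ℕ => h * x) _)
      intro r hr
      simp only [Set.mem_diff, Set.mem_iUnion, exists_prop] at hr
      obtain ⟨⟨x, hx, hrx⟩, hnot⟩ := hr
      have hni : r ∉ Set.Ioc (h * x) (h * x + h) := fun hc => hnot ⟨x, hx, hc⟩
      have hreq : r = h * x := by
        rcases hrx with ⟨h1, h2⟩
        rcases eq_or_lt_of_le h1 with heq | hlt'
        · exact heq.symm
        · exact absurd ⟨hlt', h2⟩ hni
      exact ⟨x, hx, hreq.symm⟩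
    · have hE : (⋃ x ∈ D, Set.Ioc (h * x) (h * x + h)) \
          (⋃ x ∈ D, Set.Icc (h * x) (h * x + h)) = ∅ := by
        apply Set.diff_eq_empty.mpr
        exact Set.iUnion₂_mono fun x _ => Set.Ioc_subset_Icc_self
      rw [hE]; simp
  rw [hset, MeasureTheory.setIntegral_congr_set hae]
  have hcont : Continuous fun r : ℝ => Real.exp (-r) := by fun_prop
  rw [MeasureTheory.integral_biUnion_finset (f := fun r => Real.exp (-r))
    D (fun i _ => measurableSet_Ioc)
    (by
      intro i hi j hj hij
      rw [Function.onFun, Set.Ioc_disjoint_Ioc]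
      have hij' : (i : ℝ) ≠ (j : ℝ) := by exact_mod_cast hij
      rcases lt_or_gt_of_ne hij' with hlt' | hlt'
      · have hkey : h * i + h ≤ h * j := by
          have : (i : ℝ) + 1 ≤ (j : ℝ) := by
            have : i < j := by exact_mod_cast hlt'
            exact_mod_cast this
          nlinarith
        calc min (h * i + h) (h * j + h) ≤ h * i + h := min_le_left _ _
          _ ≤ h * j := hkey
          _ ≤ max (h * i) (h * j) := le_max_right _ _
      · have hkey : h * j + h ≤ h * i := by
          have : (j : ℝ) + 1 ≤ (i : ℝ) := by
            have : j < i := by exact_mod_cast hlt'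
            exact_mod_cast this
          nlinarith
        calc min (h * i + h) (h * j + h) ≤ h * j + h := min_le_right _ _
          _ ≤ h * i := hkey
          _ ≤ max (h * i) (h * j) := le_max_left _ _)
    (fun i _ => hcont.integrableOn_Ioc)]
  -- compute each integral
  have hstep : ∀ x : ℕ, (∫ r in Set.Ioc (h * x) (h * x + h), Real.exp (-r)) =
      (1 - Real.exp (-h)) * Real.exp (-(h * x)) := by
    intro x
    rw [int_exp_neg (by linarith)]
    rw [show -(h * x + h) = -(h * x) + -h by ring, Real.exp_add]
    ring
  simp only [hstep]
  rw [← Finset.mul_sum]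
  congr 1
  · rw [hhdef, neg_div]
  -- sum over the image
  rw [hD, Finset.sum_image (fun a ha b hb hab =>
    digits_inj hM a b (hlt a ha) (hlt b hb) hab)]
  have hterm : ∀ a : Fin n → ℕ, Real.exp (-(h * (f a : ℝ))) =
      ∏ j : Fin n, Real.exp (-(h * (a j : ℝ) * (M : ℝ) ^ (j : ℕ))) := by
    intro a
    rw [← Real.exp_sum]
    congr 1
    rw [hf]
    push_cast
    rw [Finset.mul_sum, ← Finset.sum_neg_distrib]
    exact Finset.sum_congr rfl fun j _ => by ring
  refine (Finset.sum_congr rfl fun a _ => hterm a).trans ?_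
  rw [hP, ← Finset.prod_univ_sum (fun _ : Fin n => 𝒜)
    (fun (j : Fin n) (c : ℕ) => Real.exp (-(h * (c : ℝ) * (M:ℝ) ^ (j : ℕ))))]
  rw [Fin.prod_univ_eq_prod_range
    (fun j => ∑ c ∈ 𝒜, Real.exp (-(h * (c : ℝ) * (M:ℝ) ^ j))) n]
  refine Finset.prod_nbij (fun i => n - i) ?_ ?_ ?_ ?_
  · intro i hi
    simp only [Finset.mem_range] at hi
    simp only [Finset.mem_Icc]
    omega
  · intro i hi j hj hij
    simp only [Finset.coe_range, Set.mem_Iio] at hi hj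
    have hij' : n - i = n - j := hij
    omega
  · intro j hj
    simp only [Finset.coe_Icc, Set.mem_Icc] at hj
    refine ⟨n - j, by simp only [Finset.coe_range, Set.mem_Iio]; omega, ?_⟩
    show n - (n - j) = j
    omega
  · intro i hi
    simp only [Finset.mem_range] at hi
    apply Finset.sum_congr rfl
    intro c _
    congr 1
    have hpow : (M:ℝ) ^ (n - i) * (M:ℝ) ^ i = (M:ℝ) ^ n := by
      rw [← pow_add]
      congr 1
      omega
    have hMn : (M:ℝ) ^ (n - i) ≠ 0 := by positivity
    have hMn' : (M:ℝ) ^ n ≠ 0 := by positivity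
    rw [hhdef]
    field_simp
    rw [← hpow]
    ring
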